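/- For complex s with Re(s) > 1, s not an integer, real x with 0 < x < 2π, and real y, one has Σ_{n=1}^∞ sin(nx+y)/n^s = ((2π)^s / (2 Γ(s) sin(πs))) · ( cos(y − πs/2) ζ(1−s, x/(2π)) − cos(y + πs/2) ζ(1−s, 1 − x/(2π)) ). -/

import Mathlib

open HurwitzZeta Real Filter

lemma sin_eq_exp_aux (w : ℂ) : Complex.sin w =
    (Complex.exp (w * Complex.I) - Complex.exp (-(w * Complex.I))) / (2 * Complex.I) := by
  rw [Complex.sin, neg_mul, div_eq_div_iff two_ne_zero (mul_ne_zero two_ne_zero Complex.I_ne_zero)]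
  linear_combination (2 * Complex.exp (-(w * Complex.I)) - 2 * Complex.exp (w * Complex.I)) *
    Complex.I_sq

theorem sin_series_hurwitz (s : ℂ) (hs : 1 < s.re) (hsi : ∀ n : ℤ, s ≠ n)
    (x y : ℝ) (hx : 0 < x) (hx' : x < 2 * π) :
    ∑' n : ℕ+, Complex.sin ((n : ℂ) * x + y) / (n : ℂ) ^ s =
      ((2 * π : ℝ) : ℂ) ^ s / (2 * Complex.Gamma s * Complex.sin (π * s)) *
        (Complex.cos ((y : ℂ) - π * s / 2) *
            hurwitzZeta ((x / (2 * π) : ℝ) : UnitAddCircle) (1 - s) -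
          Complex.cos ((y : ℂ) + π * s / 2) *
            hurwitzZeta ((1 - x / (2 * π) : ℝ) : UnitAddCircle) (1 - s)) := by
  have hπ : (0:ℝ) < π := Real.pi_pos
  set a : ℝ := x / (2 * π) with ha
  have hsn : ∀ n : ℕ, s ≠ -n := fun n h => hsi (-n) (by push_cast; exact h)
  have hs1 : s ≠ 1 := fun h => hsi 1 (by rw [h]; norm_num)
  have hs0 : s ≠ 0 := fun h => hsi 0 (by rw [h]; norm_num)
  have hΓ : Complex.Gamma s ≠ 0 := Complex.Gamma_ne_zero hsn
  have hS : Complex.sin ((π:ℂ) * s) ≠ 0 := by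
    rw [Complex.sin_ne_zero_iff]
    intro k hk
    have hπc : (π:ℂ) ≠ 0 := Complex.ofReal_ne_zero.2 hπ.ne'
    exact hsi k (mul_left_cancel₀ hπc (by rw [hk]; ring))
  have hax : (a:ℂ) * (2 * π) = x := by
    rw [ha]
    push_cast
    exact div_mul_cancel₀ _ (by simp [Real.pi_ne_zero])
  have hneg : ((1 - a : ℝ) : UnitAddCircle) = -((a : ℝ) : UnitAddCircle) := by
    have : ((1:ℝ) : UnitAddCircle) = 0 := AddCircle.coe_period 1
    rw [sub_eq_add_neg, AddCircle.coe_add, this, zero_add, AddCircle.coe_neg]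
  set c : ℂ := (π:ℂ) * s / 2 with hc
  set u : ℂ := Complex.exp ((y:ℂ) * Complex.I) with hu
  set v : ℂ := Complex.exp (c * Complex.I) with hv
  -- the sum over ℕ
  have hsum : HasSum (fun n : ℕ ↦ Complex.sin ((n:ℂ) * x + y) / (n:ℂ) ^ s)
      ((u * expZeta a s - u⁻¹ * expZeta (-a : ℝ) s) / (2 * Complex.I)) := by
    have h1 := (hasSum_expZeta_of_one_lt_re a hs).mul_left u
    have h2 := (hasSum_expZeta_of_one_lt_re (-a) hs).mul_left u⁻¹
    have h3 := (h1.sub h2).div_const (2 * Complex.I)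
    convert h3 using 1
    · rfl
    funext n
    have hexp : Complex.exp (2*(π:ℂ)*Complex.I*(a:ℂ)*(n:ℂ)) =
        Complex.exp (((n:ℂ)*(x:ℂ))*Complex.I) := by
      congr 1
      rw [show (2*(π:ℂ)*Complex.I*(a:ℂ)*(n:ℂ)) = (n:ℂ)*((a:ℂ)*(2*(π:ℂ)))*Complex.I by ring,
        hax]
    have hexp2 : Complex.exp (2*(π:ℂ)*Complex.I*((-a:ℝ):ℂ)*(n:ℂ)) =
        Complex.exp (-(((n:ℂ)*(x:ℂ))*Complex.I)) := by
      congr 1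
      push_cast
      rw [show (2*(π:ℂ)*Complex.I*(-(a:ℂ))*(n:ℂ)) = -((n:ℂ)*((a:ℂ)*(2*(π:ℂ)))*Complex.I) by
        ring, hax]
    rw [hexp, hexp2, sin_eq_exp_aux,
      show (((n:ℂ)*x + y)*Complex.I) = ((n:ℂ)*x)*Complex.I + (y:ℂ)*Complex.I by ring,
      neg_add, Complex.exp_add,
      show -(((n:ℂ)*x)*Complex.I) + -((y:ℂ)*Complex.I)
        = (-(((n:ℂ)*x)*Complex.I)) + (-((y:ℂ)*Complex.I)) by ring,
      Complex.exp_add, Complex.exp_neg ((y:ℂ)*Complex.I), ← hu]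
    ring
  -- restrict to ℕ+
  have hsum' : HasSum (fun n : ℕ+ ↦ Complex.sin ((n:ℂ) * x + y) / (n:ℂ) ^ s)
      ((u * expZeta a s - u⁻¹ * expZeta (-a : ℝ) s) / (2 * Complex.I)) := by
    refine (Function.Injective.hasSum_iff PNat.coe_injective ?_).2 hsum
    intro m hm
    have hm0 : m = 0 := by
      by_contra h
      exact hm ⟨⟨m, Nat.pos_of_ne_zero h⟩, rfl⟩
    simp only [hm0, Nat.cast_zero, zero_mul, zero_add, Complex.zero_cpow hs0, div_zero]
  rw [hsum'.tsum_eq, hneg,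
    hurwitzZeta_one_sub _ hsn (Or.inr hs1), hurwitzZeta_one_sub _ hsn (Or.inr hs1), neg_neg]
  have hw2 : Complex.exp ((π:ℂ)*Complex.I*s/2) = v := by
    rw [hv]; congr 1; rw [hc]; ring
  have hw1 : Complex.exp (-(π:ℂ)*Complex.I*s/2) = v⁻¹ := by
    rw [hv, ← Complex.exp_neg]; congr 1; rw [hc]; ring
  have hP : ((2*π:ℝ):ℂ) = 2*(π:ℂ) := by push_cast; ring
  have hPne : (2*(π:ℂ)) ≠ 0 := by simp [Real.pi_ne_zero]
  have hPs : (2*(π:ℂ))^s ≠ 0 := by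
    rw [Complex.cpow_def_of_ne_zero hPne]
    exact Complex.exp_ne_zero _
  have hvne : v ≠ 0 := Complex.exp_ne_zero _
  have hune : u ≠ 0 := Complex.exp_ne_zero _
  have hv1 : v = Complex.cos c + Complex.sin c * Complex.I := by
    rw [hv]; exact Complex.exp_mul_I c
  have hv2 : v⁻¹ = Complex.cos c - Complex.sin c * Complex.I := by
    rw [hv, ← Complex.exp_neg, show -(c*Complex.I) = (-c)*Complex.I by ring,
      Complex.exp_mul_I, Complex.cos_neg, Complex.sin_neg]
    ring
  have hu1 : u = Complex.cos (y:ℂ) + Complex.sin (y:ℂ) * Complex.I := by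
    rw [hu]; exact Complex.exp_mul_I _
  have hu2 : u⁻¹ = Complex.cos (y:ℂ) - Complex.sin (y:ℂ) * Complex.I := by
    rw [hu, ← Complex.exp_neg, show -((y:ℂ)*Complex.I) = (-(y:ℂ))*Complex.I by ring,
      Complex.exp_mul_I, Complex.cos_neg, Complex.sin_neg]
    ring
  have hsin2 : Complex.sin ((π:ℂ)*s) = 2 * Complex.sin c * Complex.cos c := by
    rw [show (π:ℂ)*s = 2*c by rw [hc]; ring, Complex.sin_two_mul]
  have hC1 : Complex.cos ((y:ℂ) - (π:ℂ)*s/2) * v⁻¹ - Complex.cos ((y:ℂ) + (π:ℂ)*s/2) * v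
      = -Complex.I * u * Complex.sin ((π:ℂ)*s) := by
    rw [show (y:ℂ) - (π:ℂ)*s/2 = (y:ℂ) - c from by rw [hc],
      show (y:ℂ) + (π:ℂ)*s/2 = (y:ℂ) + c from by rw [hc],
      Complex.cos_sub, Complex.cos_add, hv2, hv1, hu1, hsin2]
    linear_combination (2*Complex.sin (y:ℂ)*Complex.sin c*Complex.cos c) * Complex.I_sq
  have hC2 : Complex.cos ((y:ℂ) - (π:ℂ)*s/2) * v - Complex.cos ((y:ℂ) + (π:ℂ)*s/2) * v⁻¹
      = Complex.I * u⁻¹ * Complex.sin ((π:ℂ)*s) := by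
    rw [show (y:ℂ) - (π:ℂ)*s/2 = (y:ℂ) - c from by rw [hc],
      show (y:ℂ) + (π:ℂ)*s/2 = (y:ℂ) + c from by rw [hc],
      Complex.cos_sub, Complex.cos_add, hv2, hu2, hv1, hsin2]
    linear_combination (2*Complex.sin (y:ℂ)*Complex.sin c*Complex.cos c) * Complex.I_sq
  rw [hw1, hw2, hP, Complex.cpow_neg]
  have hPP : ((2*(π:ℂ))^s) * ((2*(π:ℂ))^s)⁻¹ = 1 := mul_inv_cancel₀ hPs
  have hcoe : ((-a : ℝ) : UnitAddCircle) = -((a : ℝ) : UnitAddCircle) := by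
    rw [AddCircle.coe_neg]
  rw [hcoe]
  have key : (2 * (π:ℂ)) ^ s / (2 * Complex.Gamma s * Complex.sin ((π:ℂ) * s)) *
      (Complex.cos ((y:ℂ) - c) *
          (((2 * (π:ℂ)) ^ s)⁻¹ * Complex.Gamma s *
            (v⁻¹ * expZeta ((a:ℝ) : UnitAddCircle) s + v * expZeta (-((a:ℝ) : UnitAddCircle)) s)) -
        Complex.cos ((y:ℂ) + c) *
          (((2 * (π:ℂ)) ^ s)⁻¹ * Complex.Gamma s *
            (v⁻¹ * expZeta (-((a:ℝ) : UnitAddCircle)) s + v * expZeta ((a:ℝ) : UnitAddCircle) s)))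
      = (u * expZeta ((a:ℝ) : UnitAddCircle) s - u⁻¹ * expZeta (-((a:ℝ) : UnitAddCircle)) s) /
        (2 * Complex.I) := by
    have step1 : (2 * (π:ℂ)) ^ s / (2 * Complex.Gamma s * Complex.sin ((π:ℂ) * s)) *
        (Complex.cos ((y:ℂ) - c) *
            (((2 * (π:ℂ)) ^ s)⁻¹ * Complex.Gamma s *
              (v⁻¹ * expZeta ((a:ℝ) : UnitAddCircle) s + v * expZeta (-((a:ℝ) : UnitAddCircle)) s)) -
          Complex.cos ((y:ℂ) + c) *
            (((2 * (π:ℂ)) ^ s)⁻¹ * Complex.Gamma s *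
              (v⁻¹ * expZeta (-((a:ℝ) : UnitAddCircle)) s + v * expZeta ((a:ℝ) : UnitAddCircle) s)))
        = ((2 * (π:ℂ)) ^ s * ((2 * (π:ℂ)) ^ s)⁻¹) *
          ((Complex.cos ((y:ℂ) - c) * v⁻¹ - Complex.cos ((y:ℂ) + c) * v) *
              expZeta ((a:ℝ) : UnitAddCircle) s +
            (Complex.cos ((y:ℂ) - c) * v - Complex.cos ((y:ℂ) + c) * v⁻¹) *
              expZeta (-((a:ℝ) : UnitAddCircle)) s) * Complex.Gamma s /
          (2 * Complex.Gamma s * Complex.sin ((π:ℂ) * s)) := by ring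
    rw [step1, hPP, hC1, hC2,
      div_eq_div_iff (mul_ne_zero (mul_ne_zero two_ne_zero hΓ) hS)
        (mul_ne_zero two_ne_zero Complex.I_ne_zero)]
    linear_combination (2 * Complex.Gamma s * Complex.sin ((π:ℂ)*s) *
      (u⁻¹ * expZeta (-((a:ℝ) : UnitAddCircle)) s - u * expZeta ((a:ℝ) : UnitAddCircle) s)) *
      Complex.I_sq
  exact key.symm
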